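/- Suppose u(s) = Σ_{i=1}^n g_i(s_0, s_i) represents a family of preferences over S_0. If there exist a partition {A, B} of the opponents, actions s_0, s'_0 ∈ S_0, and opponent sub-profiles s_A, s'_A, s_B, s'_B such that u(s_0, s_A, s_B) ≥ u(s'_0, s_A, s_B), u(s'_0, s'_A, s_B) ≥ u(s_0, s'_A, s_B), u(s'_0, s_A, s'_B) ≥ u(s_0, s_A, s'_B), and u(s_0, s'_A, s'_B) ≥ u(s'_0, s'_A, s'_B), then all four of these inequalities are in fact equalities. -/
import Mathlib


/-- The four comparisons in a short balanced sequence force equalities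
for additively separable utilities. -/
theorem stmt_3 {n : ℕ} {S0 : Type*} {S : Fin n → Type*}
    (g : ∀ i, S0 → S i → ℝ)
    (u : S0 → (∀ i, S i) → ℝ)
    (hu : ∀ s0 sp, u s0 sp = ∑ i, g i s0 (sp i))
    (A : Finset (Fin n))
    (combine : (∀ i, S i) → (∀ i, S i) → ∀ i, S i)
    (hcombine : ∀ a b i, combine a b i = if i ∈ A then a i else b i)
    (s0 s0' : S0) (sA sA' sB sB' : ∀ i, S i)
    (h1 : u s0 (combine sA sB) ≥ u s0' (combine sA sB))
    (h2 : u s0' (combine sA' sB) ≥ u s0 (combine sA' sB))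
    (h3 : u s0' (combine sA sB') ≥ u s0 (combine sA sB'))
    (h4 : u s0 (combine sA' sB') ≥ u s0' (combine sA' sB')) :
    u s0 (combine sA sB) = u s0' (combine sA sB) ∧
    u s0' (combine sA' sB) = u s0 (combine sA' sB) ∧
    u s0' (combine sA sB') = u s0 (combine sA sB') ∧
    u s0 (combine sA' sB') = u s0' (combine sA' sB') := by
  have key : ∀ (t : S0) (x y : ∀ i, S i),
      u t (combine x y) = (∑ i ∈ A, g i t (x i)) + ∑ i ∈ Aᶜ, g i t (y i) := by
    intro t x y
    rw [hu, ← Finset.sum_add_sum_compl A]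
    congr 1
    · exact Finset.sum_congr rfl fun i hi => by rw [hcombine, if_pos hi]
    · exact Finset.sum_congr rfl fun i hi => by
        rw [hcombine, if_neg (Finset.mem_compl.mp hi)]
  simp only [key] at h1 h2 h3 h4 ⊢
  refine ⟨by linarith, by linarith, by linarith, by linarith⟩
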